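/- Let G = ℤ_{A₁} × ⋯ × ℤ_{A_N} and suppose a_j divides A_j for every j = 1,…,N. Then a set Λ ⊆ G is a tiling complement of the cube Q_{a₁,…,a_N} = [a₁] × ⋯ × [a_N] (i.e., Q_{a₁,…,a_N} + Λ tiles G) if and only if Λ, regarded as a subset of Ĝ ≃ G, is a spectrum of the dual cube Q*_{a₁,…,a_N} = [A₁/a₁] × ⋯ × [A_N/a_N]. -/

import Mathlib

/-- The discrete cube `[a₁] × ⋯ × [a_N]` inside `ℤ_{A₁} × ⋯ × ℤ_{A_N}`. -/
def cube {N : ℕ} (A a : Fin N → ℕ) : Finset (∀ j, ZMod (A j)) :=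
  Finset.image (fun v : ∀ j, Fin (a j) => fun j => ((v j : ℕ) : ZMod (A j))) Finset.univ

/-- `E` tiles the abelian group `G` with translate set `T`. -/
def Tiles {G : Type*} [AddCommGroup G] (E T : Finset G) : Prop :=
  ∀ x : G, ∃! p : G × G, p.1 ∈ E ∧ p.2 ∈ T ∧ x = p.1 + p.2

/-- The character `e_λ(x) = exp(2πi Σ_j λ_j x_j / A_j)`. -/
noncomputable def ePi {N : ℕ} (A : Fin N → ℕ) (lam x : ∀ j, ZMod (A j)) : ℂ :=
  Complex.exp (2 * (Real.pi : ℂ) * Complex.I *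
    ∑ j, ((lam j).val : ℂ) * ((x j).val : ℂ) / (A j : ℂ))

/-- `Λ` is a spectrum of `E`. -/
def IsSpectrum {N : ℕ} (A : Fin N → ℕ) (E L : Finset (∀ j, ZMod (A j))) : Prop :=
  L.card = E.card ∧
  ∀ l ∈ L, ∀ m ∈ L, l ≠ m →
    ∑ x ∈ E, ePi A l x * (starRingEnd ℂ) (ePi A m x) = 0

section Pre
open Finset Complex

noncomputable def chi (n : ℕ) (z : ZMod n) : ℂ :=
  Complex.exp (2 * (Real.pi : ℂ) * Complex.I * z.val / n)

lemma tpi_ne_zero : 2 * (Real.pi : ℂ) * Complex.I ≠ 0 := by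
  have hpi : (Real.pi : ℂ) ≠ 0 := by exact_mod_cast Real.pi_ne_zero
  simp [Complex.I_ne_zero, hpi]

lemma exp_tpi_eq_one_iff (n : ℕ) (hn : n ≠ 0) (v : ℕ) :
    Complex.exp (2 * (Real.pi : ℂ) * Complex.I * v / n) = 1 ↔ n ∣ v := by
  have hne : (n : ℂ) ≠ 0 := Nat.cast_ne_zero.mpr hn
  rw [Complex.exp_eq_one_iff]
  constructor
  · rintro ⟨k, hk⟩
    field_simp at hk
    have h2 : (2 * (Real.pi : ℂ) * Complex.I) * (v : ℂ)
        = (2 * (Real.pi : ℂ) * Complex.I) * ((k : ℂ) * n) := by linear_combination (2 * (Real.pi : ℂ) * Complex.I) * hk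
    have h3 : (v : ℂ) = (k : ℂ) * n := mul_left_cancel₀ tpi_ne_zero h2
    have h4 : (v : ℤ) = k * n := by exact_mod_cast h3
    have h5 : (n : ℤ) ∣ (v : ℤ) := ⟨k, by rw [h4]; ring⟩
    exact_mod_cast h5
  · rintro ⟨m, rfl⟩
    exact ⟨m, by push_cast; field_simp⟩

lemma geom_sum_zero_iff (n b : ℕ) (hn : n ≠ 0) (hb : b ∣ n) (hb0 : b ≠ 0) (v : ℕ) :
    (∑ x ∈ Finset.range b, Complex.exp (2 * (Real.pi : ℂ) * Complex.I * (v * x) / n)) = 0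
      ↔ ((n / b) ∣ v ∧ ¬ (n ∣ v)) := by
  have hne : (n : ℂ) ≠ 0 := Nat.cast_ne_zero.mpr hn
  set r : ℂ := Complex.exp (2 * (Real.pi : ℂ) * Complex.I * v / n) with hr
  have hterm : ∀ x : ℕ, Complex.exp (2 * (Real.pi : ℂ) * Complex.I * (v * x) / n) = r ^ x := by
    intro x
    rw [hr, ← Complex.exp_nat_mul]
    congr 1
    field_simp
  simp only [hterm]
  have hr1 : r = 1 ↔ n ∣ v := exp_tpi_eq_one_iff n hn v
  have hrb : r ^ b = 1 ↔ (n / b) ∣ v := by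
    rw [← Complex.exp_nat_mul]
    have : (b : ℂ) * (2 * (Real.pi : ℂ) * Complex.I * v / n) =
        2 * (Real.pi : ℂ) * Complex.I * (v * b) / n := by ring
    rw [this, show ((v:ℂ) * b) = ((v*b : ℕ) : ℂ) by push_cast; ring,
      exp_tpi_eq_one_iff n hn (v * b)]
    obtain ⟨c, rfl⟩ := hb
    rw [Nat.mul_div_cancel_left c (Nat.pos_of_ne_zero hb0)]
    constructor
    · rintro ⟨k, hk⟩
      exact ⟨k, by
        have hbpos : 0 < b := Nat.pos_of_ne_zero hb0
        have : v * b = c * k * b := by rw [hk]; ring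
        exact Nat.eq_of_mul_eq_mul_right hbpos this⟩
    · rintro ⟨k, rfl⟩
      exact ⟨k, by ring⟩
  by_cases h1 : n ∣ v
  · have : r = 1 := hr1.mpr h1
    simp only [this, one_pow, Finset.sum_const, Finset.card_range, nsmul_eq_mul, mul_one]
    constructor
    · intro hc; exact absurd hc (Nat.cast_ne_zero.mpr hb0)
    · rintro ⟨-, hc⟩; exact absurd h1 hc
  · have hrne : r ≠ 1 := fun hc => h1 (hr1.mp hc)
    rw [geom_sum_eq hrne]
    rw [div_eq_zero_iff]
    constructor
    · rintro (hz | hz)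
      · rw [sub_eq_zero] at hz
        exact ⟨hrb.mp hz, h1⟩
      · exact absurd (sub_eq_zero.mp hz) hrne
    · rintro ⟨hd, -⟩
      left
      rw [sub_eq_zero]
      exact hrb.mpr hd
lemma exp_tpi_mod (n : ℕ) (hn : n ≠ 0) (u : ℕ) :
    Complex.exp (2 * (Real.pi : ℂ) * Complex.I * u / n)
      = Complex.exp (2 * (Real.pi : ℂ) * Complex.I * ((u % n : ℕ) : ℂ) / n) := by
  have hne : (n : ℂ) ≠ 0 := Nat.cast_ne_zero.mpr hn
  set q := u / n with hq
  set s := u % n with hs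
  have hu : u = n * q + s := (Nat.div_add_mod u n).symm
  rw [hu]
  rw [show ((n * q + s : ℕ) : ℂ) = (n : ℂ) * q + s by push_cast; ring]
  rw [show 2 * (Real.pi : ℂ) * Complex.I * ((n : ℂ) * q + s) / n
      = ((q : ℕ) : ℂ) * (2 * (Real.pi : ℂ) * Complex.I)
        + 2 * (Real.pi : ℂ) * Complex.I * (s : ℂ) / n by field_simp]
  rw [Complex.exp_add]
  have h1 : Complex.exp (((q : ℕ) : ℂ) * (2 * (Real.pi : ℂ) * Complex.I)) = 1 := by
    rw [show ((q : ℕ) : ℂ) = ((q : ℤ) : ℂ) by push_cast; ring]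
    exact Complex.exp_int_mul_two_pi_mul_I _
  rw [h1, one_mul]

lemma chi_natCast (n : ℕ) (hn : n ≠ 0) (u : ℕ) :
    chi n (u : ZMod n) = Complex.exp (2 * (Real.pi : ℂ) * Complex.I * u / n) := by
  rw [chi, ZMod.val_natCast, exp_tpi_mod n hn u]

lemma chi_cast_val (n : ℕ) [NeZero n] (z : ZMod n) : chi n ((z.val : ℕ) : ZMod n) = chi n z := by
  rw [ZMod.natCast_rightInverse z]

lemma chi_add (n : ℕ) [NeZero n] (z w : ZMod n) : chi n (z + w) = chi n z * chi n w := by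
  have hn : n ≠ 0 := NeZero.ne n
  have hz := (ZMod.natCast_rightInverse z).symm
  have hw := (ZMod.natCast_rightInverse w).symm
  rw [hz, hw, ← Nat.cast_add, chi_natCast n hn, chi_natCast n hn, chi_natCast n hn,
    ← Complex.exp_add]
  congr 1
  push_cast
  ring

lemma chi_zero (n : ℕ) : chi n 0 = 1 := by
  simp [chi]

lemma chi_ne_zero (n : ℕ) (z : ZMod n) : chi n z ≠ 0 := Complex.exp_ne_zero _

lemma chi_conj (n : ℕ) [NeZero n] (z : ZMod n) :
    (starRingEnd ℂ) (chi n z) = chi n (-z) := by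
  have h1 : chi n z * chi n (-z) = 1 := by
    rw [← chi_add, add_neg_cancel, chi_zero]
  have h2 : chi n z * (starRingEnd ℂ) (chi n z) = 1 := by
    rw [Complex.mul_conj]
    norm_cast
    rw [chi, Complex.normSq_eq_norm_sq, Complex.norm_exp]
    rw [show 2 * (Real.pi : ℂ) * Complex.I * (z.val : ℂ) / n
        = ((2 * Real.pi * z.val / n : ℝ) : ℂ) * Complex.I by push_cast; ring]
    simp
  exact mul_left_cancel₀ (chi_ne_zero n z) (h2.trans h1.symm)

lemma chi_mul_natCast (n : ℕ) (hn : n ≠ 0) (z : ZMod n) [NeZero n] (t : ℕ) :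
    chi n (z * (t : ZMod n)) = Complex.exp (2 * (Real.pi : ℂ) * Complex.I * (z.val * t) / n) := by
  conv_lhs => rw [(ZMod.natCast_rightInverse z).symm, ← Nat.cast_mul, chi_natCast n hn]
  congr 1
  push_cast
  ring
end Pre

open Finset Complex

section Cube

variable {N : ℕ} (A : Fin N → ℕ) [∀ j, NeZero (A j)]
set_option linter.unusedSectionVars false

lemma cube_map_inj {a : Fin N → ℕ} (h : ∀ j, a j ≤ A j) :
    Function.Injective (fun v : ∀ j, Fin (a j) =>
      (fun j => ((v j : ℕ) : ZMod (A j)) : ∀ j, ZMod (A j))) := by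
  intro v w hvw
  funext j
  have := congrFun hvw j
  simp only at this
  have hv : (((v j : ℕ) : ZMod (A j))).val = (v j : ℕ) :=
    ZMod.val_cast_of_lt (lt_of_lt_of_le (v j).isLt (h j))
  have hw : (((w j : ℕ) : ZMod (A j))).val = (w j : ℕ) :=
    ZMod.val_cast_of_lt (lt_of_lt_of_le (w j).isLt (h j))
  apply Fin.ext
  rw [← hv, ← hw, this]

lemma mem_cube_iff {a : Fin N → ℕ} (h : ∀ j, a j ≤ A j) (x : ∀ j, ZMod (A j)) :
    x ∈ cube A a ↔ ∀ j, (x j).val < a j := by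
  constructor
  · rintro hx j
    rw [cube, Finset.mem_image] at hx
    obtain ⟨v, -, rfl⟩ := hx
    rw [ZMod.val_cast_of_lt (lt_of_lt_of_le (v j).isLt (h j))]
    exact (v j).isLt
  · intro hx
    rw [cube, Finset.mem_image]
    refine ⟨fun j => ⟨(x j).val, hx j⟩, Finset.mem_univ _, ?_⟩
    funext j
    exact ZMod.natCast_rightInverse (x j)

lemma card_cube {a : Fin N → ℕ} (h : ∀ j, a j ≤ A j) :
    (cube A a).card = ∏ j, a j := by
  rw [cube, Finset.card_image_of_injective _ (cube_map_inj A h), Finset.card_univ,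
    Fintype.card_pi]
  simp

lemma sum_cube {a : Fin N → ℕ} (h : ∀ j, a j ≤ A j) (f : ∀ j, ZMod (A j) → ℂ) :
    ∑ x ∈ cube A a, ∏ j, f j (x j)
      = ∏ j, ∑ t ∈ Finset.range (a j), f j ((t : ℕ) : ZMod (A j)) := by
  rw [cube, Finset.sum_image (fun v _ w _ hvw => cube_map_inj A h hvw)]
  rw [show (∏ j, ∑ t ∈ Finset.range (a j), f j ((t : ℕ) : ZMod (A j)))
      = ∏ j, ∑ t : Fin (a j), f j (((t : ℕ) : ZMod (A j))) by
    refine Finset.prod_congr rfl fun j _ => ?_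
    rw [Fin.sum_univ_eq_sum_range (fun t => f j ((t : ℕ) : ZMod (A j)))]]
  rw [Finset.prod_univ_sum (fun j => (Finset.univ : Finset (Fin (a j))))
    (fun j t => f j ((t : ℕ) : ZMod (A j)))]
  rw [Fintype.piFinset_univ]

/-- The bilinear pairing `P lam x = ∏ j χ(lam_j x_j)`. -/
noncomputable def pairP (lam x : ∀ j, ZMod (A j)) : ℂ := ∏ j, chi (A j) (lam j * x j)

lemma chi_mul_val (n : ℕ) [NeZero n] (z w : ZMod n) :
    chi n (z * w) = Complex.exp (2 * (Real.pi : ℂ) * Complex.I * (z.val * w.val) / n) := by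
  conv_lhs => rw [(ZMod.natCast_rightInverse w).symm]
  exact chi_mul_natCast n (NeZero.ne n) z w.val

lemma ePi_eq_pairP (lam x : ∀ j, ZMod (A j)) : ePi A lam x = pairP A lam x := by
  rw [ePi, pairP, Finset.mul_sum, Complex.exp_sum]
  refine Finset.prod_congr rfl fun j _ => ?_
  rw [chi_mul_val]
  congr 1
  ring

lemma pairP_comm (lam x : ∀ j, ZMod (A j)) : pairP A lam x = pairP A x lam := by
  rw [pairP, pairP]
  exact Finset.prod_congr rfl fun j _ => by rw [mul_comm]

lemma pairP_add_right (lam x y : ∀ j, ZMod (A j)) :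
    pairP A lam (x + y) = pairP A lam x * pairP A lam y := by
  rw [pairP, pairP, pairP, ← Finset.prod_mul_distrib]
  refine Finset.prod_congr rfl fun j _ => ?_
  have : lam j * (x + y) j = lam j * x j + lam j * y j := by
    simp [Pi.add_apply, mul_add]
  rw [this, chi_add]

lemma pairP_add_left (lam mu x : ∀ j, ZMod (A j)) :
    pairP A (lam + mu) x = pairP A lam x * pairP A mu x := by
  rw [pairP_comm, pairP_comm A lam, pairP_comm A mu, pairP_add_right]

lemma pairP_conj (lam x : ∀ j, ZMod (A j)) :
    (starRingEnd ℂ) (pairP A lam x) = pairP A (-lam) x := by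
  rw [pairP, map_prod, pairP]
  refine Finset.prod_congr rfl fun j _ => ?_
  rw [chi_conj]
  congr 1
  simp [neg_mul]

lemma pairP_neg_right (lam x : ∀ j, ZMod (A j)) :
    pairP A lam (-x) = pairP A (-lam) x := by
  rw [pairP, pairP]
  refine Finset.prod_congr rfl fun j _ => ?_
  congr 1
  simp

lemma pairP_zero_left (x : ∀ j, ZMod (A j)) : pairP A 0 x = 1 := by
  rw [pairP]
  refine Finset.prod_eq_one fun j _ => ?_
  simp [chi_zero]

lemma sum_cube_pairP {s : Fin N → ℕ} (h : ∀ j, s j ≤ A j) (ν : ∀ j, ZMod (A j)) :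
    ∑ x ∈ cube A s, pairP A ν x
      = ∏ j, ∑ t ∈ Finset.range (s j),
          Complex.exp (2 * (Real.pi : ℂ) * Complex.I * (((ν j).val : ℂ) * t) / A j) := by
  rw [show (∑ x ∈ cube A s, pairP A ν x)
      = ∑ x ∈ cube A s, ∏ j, chi (A j) (ν j * x j) from rfl]
  rw [sum_cube A h (fun j z => chi (A j) (ν j * z))]
  refine Finset.prod_congr rfl fun j _ => Finset.sum_congr rfl fun t _ => ?_
  rw [chi_mul_natCast (A j) (NeZero.ne (A j)) (ν j) t]

lemma sum_cube_pairP_eq_zero_iff {s : Fin N → ℕ} (hdvd : ∀ j, s j ∣ A j)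
    (hs0 : ∀ j, s j ≠ 0) (ν : ∀ j, ZMod (A j)) :
    (∑ x ∈ cube A s, pairP A ν x) = 0
      ↔ ∃ j, (A j / s j) ∣ (ν j).val ∧ ν j ≠ 0 := by
  have hle : ∀ j, s j ≤ A j := fun j => Nat.le_of_dvd (Nat.pos_of_ne_zero (NeZero.ne _)) (hdvd j)
  rw [sum_cube_pairP A hle, Finset.prod_eq_zero_iff]
  constructor
  · rintro ⟨j, -, hj⟩
    refine ⟨j, ?_⟩
    rw [geom_sum_zero_iff (A j) (s j) (NeZero.ne _) (hdvd j) (hs0 j) ((ν j).val)] at hj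
    refine ⟨hj.1, fun hz => hj.2 ?_⟩
    rw [hz]
    simp
  · rintro ⟨j, hdvd2, hne⟩
    refine ⟨j, Finset.mem_univ j, ?_⟩
    rw [geom_sum_zero_iff (A j) (s j) (NeZero.ne _) (hdvd j) (hs0 j) ((ν j).val)]
    refine ⟨hdvd2, fun hd => hne ?_⟩
    have hlt : (ν j).val < A j := ZMod.val_lt (ν j)
    exact (ZMod.val_eq_zero (ν j)).mp (Nat.eq_zero_of_dvd_of_lt hd hlt)

end Cube
section Helper

lemma zmod_eq_of_dvd_sub_val (n s : ℕ) [NeZero n] (hs : s ∣ n) (x y : ZMod n)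
    (hx : x.val < s) (hy : y.val < s) (hd : s ∣ (x - y).val) : x = y := by
  have hn0 : 0 < n := Nat.pos_of_ne_zero (NeZero.ne n)
  have hsn : s ≤ n := Nat.le_of_dvd hn0 hs
  have key : ∀ u v : ZMod n, v.val ≤ u.val → u.val < s → (u - v) =
      (((u.val - v.val : ℕ)) : ZMod n) := by
    intro u v huv hu
    rw [Nat.cast_sub huv, ZMod.natCast_rightInverse u, ZMod.natCast_rightInverse v]
  by_cases hxy : y.val ≤ x.val
  · have h1 : (x - y) = (((x.val - y.val : ℕ)) : ZMod n) := key x y hxy hx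
    have h2 : (x - y).val = x.val - y.val := by
      rw [h1]; exact ZMod.val_cast_of_lt (lt_of_le_of_lt (Nat.sub_le _ _) (lt_of_lt_of_le hx hsn))
    rw [h2] at hd
    have h3 : x.val - y.val < s := lt_of_le_of_lt (Nat.sub_le _ _) hx
    have h4 : x.val - y.val = 0 := Nat.eq_zero_of_dvd_of_lt hd h3
    have h5 : x.val = y.val := by omega
    calc x = ((x.val : ℕ) : ZMod n) := (ZMod.natCast_rightInverse x).symm
    _ = ((y.val : ℕ) : ZMod n) := by rw [h5]
    _ = y := ZMod.natCast_rightInverse y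
  · push_neg at hxy
    by_cases h0 : x - y = 0
    · exact sub_eq_zero.mp h0
    exfalso
    have h1 : (y - x) = (((y.val - x.val : ℕ)) : ZMod n) := key y x (le_of_lt hxy) hy
    have h2 : (y - x).val = y.val - x.val := by
      rw [h1]; exact ZMod.val_cast_of_lt (lt_of_le_of_lt (Nat.sub_le _ _) (lt_of_lt_of_le hy hsn))
    have h3 : (y - x) = -(x - y) := by ring
    have h4 : (-(x - y)).val = n - (x - y).val := by
      rw [ZMod.neg_val]; simp [h0]
    have h5 : s ∣ (y - x).val := by
      rw [h3, h4]
      exact Nat.dvd_sub hs hd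
    rw [h2] at h5
    have h6 : 0 < y.val - x.val := by omega
    have h7 : y.val - x.val < s := lt_of_le_of_lt (Nat.sub_le _ _) hy
    exact absurd (Nat.le_of_dvd h6 h5) (not_le.mpr h7)

end Helper

section TilesFacts

variable {N : ℕ} (A : Fin N → ℕ) [∀ j, NeZero (A j)]
set_option linter.unusedSectionVars false

lemma cube_univ : cube A (fun j => A j) = Finset.univ := by
  ext x
  simp only [Finset.mem_univ, iff_true]
  rw [mem_cube_iff A (fun j => le_refl (A j))]
  exact fun j => ZMod.val_lt (x j)

lemma sum_univ_pairP_eq_zero {ξ : ∀ j, ZMod (A j)} (hξ : ξ ≠ 0) :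
    ∑ x : (∀ j, ZMod (A j)), pairP A ξ x = 0 := by
  rw [← cube_univ A]
  rw [sum_cube_pairP_eq_zero_iff A (fun j => dvd_refl (A j)) (fun j => NeZero.ne (A j)) ξ]
  obtain ⟨j, hj⟩ := Function.ne_iff.mp hξ
  exact ⟨j, by simp [Nat.div_self (Nat.pos_of_ne_zero (NeZero.ne (A j)))], hj⟩

variable {a : Fin N → ℕ} {L : Finset (∀ j, ZMod (A j))}

lemma tiles_card (hT : Tiles (cube A a) L) :
    (cube A a).card * L.card = ∏ j, A j := by
  classical
  set s := (cube A a) ×ˢ L with hs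
  have hbij : Function.Bijective (fun q : {p // p ∈ s} => q.1.1 + q.1.2) := by
    constructor
    · rintro ⟨p, hp⟩ ⟨q, hq⟩ h
      simp only at h
      rw [Finset.mem_product] at hp hq
      obtain ⟨hu, -⟩ := hT (p.1 + p.2)
      have h1 := (hT (p.1 + p.2)).unique ⟨hp.1, hp.2, rfl⟩ ⟨hq.1, hq.2, h⟩
      exact Subtype.ext h1
    · intro x
      obtain ⟨p, ⟨hp1, hp2, hp3⟩, -⟩ := hT x
      exact ⟨⟨p, Finset.mem_product.mpr ⟨hp1, hp2⟩⟩, hp3.symm⟩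
  have := Fintype.card_of_bijective hbij
  rw [Fintype.card_coe, hs, Finset.card_product] at this
  rw [this, Fintype.card_pi]
  exact Finset.prod_congr rfl fun j _ => ZMod.card (A j)

lemma tiles_sum (hT : Tiles (cube A a) L) (ξ : ∀ j, ZMod (A j)) :
    (∑ e ∈ cube A a, pairP A ξ e) * (∑ l ∈ L, pairP A ξ l)
      = ∑ x : (∀ j, ZMod (A j)), pairP A ξ x := by
  classical
  rw [Finset.sum_mul_sum]
  rw [show (∑ e ∈ cube A a, ∑ l ∈ L, pairP A ξ e * pairP A ξ l)
      = ∑ p ∈ (cube A a) ×ˢ L, pairP A ξ (p.1 + p.2) by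
    rw [Finset.sum_product]
    exact Finset.sum_congr rfl fun e _ => Finset.sum_congr rfl fun l _ =>
      (pairP_add_right A ξ e l).symm]
  refine Finset.sum_bij (fun p _ => p.1 + p.2) (fun p _ => Finset.mem_univ _) ?_ ?_ ?_
  · rintro p hp q hq h
    rw [Finset.mem_product] at hp hq
    exact (hT (p.1 + p.2)).unique ⟨hp.1, hp.2, rfl⟩ ⟨hq.1, hq.2, h⟩
  · intro x _
    obtain ⟨p, ⟨hp1, hp2, hp3⟩, -⟩ := hT x
    exact ⟨p, Finset.mem_product.mpr ⟨hp1, hp2⟩, hp3.symm⟩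
  · intro p _
    rfl

lemma tiles_lhat_zero (hT : Tiles (cube A a) L) {ξ : ∀ j, ZMod (A j)} (hξ : ξ ≠ 0)
    (hc : (∑ e ∈ cube A a, pairP A ξ e) ≠ 0) :
    ∑ l ∈ L, pairP A ξ l = 0 := by
  have h := tiles_sum A hT ξ
  rw [sum_univ_pairP_eq_zero A hξ] at h
  exact (mul_eq_zero.mp h).resolve_left hc

end TilesFacts
section Main

variable {N : ℕ} (A : Fin N → ℕ) [∀ j, NeZero (A j)]
set_option linter.unusedSectionVars false

lemma pair_swap (l m x y : ∀ j, ZMod (A j)) :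
    pairP A (x - y) l * (starRingEnd ℂ) (pairP A (x - y) m)
      = pairP A (l - m) x * (starRingEnd ℂ) (pairP A (l - m) y) := by
  rw [pairP_conj, pairP_conj, pairP, pairP, pairP, pairP,
    ← Finset.prod_mul_distrib, ← Finset.prod_mul_distrib]
  refine Finset.prod_congr rfl fun j _ => ?_
  rw [← chi_add, ← chi_add]
  congr 1
  simp only [Pi.sub_apply, Pi.neg_apply]
  ring

lemma sum4_comm {α : Type*} (Q L : Finset α) (f : α → α → α → α → ℂ) :
    ∑ x ∈ Q, ∑ y ∈ Q, ∑ l ∈ L, ∑ m ∈ L, f x y l m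
      = ∑ l ∈ L, ∑ m ∈ L, ∑ x ∈ Q, ∑ y ∈ Q, f x y l m := by
  have s1 : ∑ x ∈ Q, ∑ y ∈ Q, ∑ l ∈ L, ∑ m ∈ L, f x y l m
      = ∑ x ∈ Q, ∑ l ∈ L, ∑ y ∈ Q, ∑ m ∈ L, f x y l m :=
    Finset.sum_congr rfl fun x _ => Finset.sum_comm
  have s2 : ∑ x ∈ Q, ∑ l ∈ L, ∑ y ∈ Q, ∑ m ∈ L, f x y l m
      = ∑ l ∈ L, ∑ x ∈ Q, ∑ y ∈ Q, ∑ m ∈ L, f x y l m := Finset.sum_comm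
  have s3 : ∑ l ∈ L, ∑ x ∈ Q, ∑ y ∈ Q, ∑ m ∈ L, f x y l m
      = ∑ l ∈ L, ∑ m ∈ L, ∑ x ∈ Q, ∑ y ∈ Q, f x y l m := by
    refine Finset.sum_congr rfl fun l _ => ?_
    rw [show (∑ x ∈ Q, ∑ y ∈ Q, ∑ m ∈ L, f x y l m)
        = ∑ x ∈ Q, ∑ m ∈ L, ∑ y ∈ Q, f x y l m from
      Finset.sum_congr rfl fun x _ => Finset.sum_comm]
    exact Finset.sum_comm
  rw [s1, s2, s3]

lemma spectrum_sum_eq (l m : ∀ j, ZMod (A j)) (s : Finset (∀ j, ZMod (A j))) :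
    ∑ x ∈ s, ePi A l x * (starRingEnd ℂ) (ePi A m x) = ∑ x ∈ s, pairP A (l - m) x := by
  refine Finset.sum_congr rfl fun x _ => ?_
  rw [ePi_eq_pairP, ePi_eq_pairP, pairP_conj, ← pairP_add_left, sub_eq_add_neg]

end Main

theorem tiling_complement_iff_spectrum_of_dual {N : ℕ} (A a : Fin N → ℕ)
    [∀ j, NeZero (A j)] (ha : ∀ j, 0 < a j) (hdvd : ∀ j, a j ∣ A j)
    (L : Finset (∀ j, ZMod (A j))) :
    Tiles (cube A a) L ↔ IsSpectrum A (cube A (fun j => A j / a j)) L := by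
  classical
  set b : Fin N → ℕ := fun j => A j / a j with hbdef
  have hA0 : ∀ j, 0 < A j := fun j => Nat.pos_of_ne_zero (NeZero.ne _)
  have ha_le : ∀ j, a j ≤ A j := fun j => Nat.le_of_dvd (hA0 j) (hdvd j)
  have ha0 : ∀ j, a j ≠ 0 := fun j => (ha j).ne'
  have hbpos : ∀ j, 0 < b j := fun j => Nat.div_pos (ha_le j) (ha j)
  have hb0 : ∀ j, b j ≠ 0 := fun j => (hbpos j).ne'
  have hbdvd : ∀ j, b j ∣ A j := fun j => ⟨a j, (Nat.div_mul_cancel (hdvd j)).symm⟩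
  have hb_le : ∀ j, b j ≤ A j := fun j => Nat.le_of_dvd (hA0 j) (hbdvd j)
  have hab : ∀ j, A j / b j = a j := fun j => Nat.div_div_self (hdvd j) (NeZero.ne _)
  have hprodA : ∏ j, A j = (∏ j, a j) * ∏ j, b j := by
    rw [← Finset.prod_mul_distrib]
    exact Finset.prod_congr rfl fun j _ => (Nat.mul_div_cancel' (hdvd j)).symm
  constructor
  · -- Tiling → Spectrum
    intro hT
    have hLb : L.card = (cube A b).card := by
      have h1 := tiles_card A hT
      rw [card_cube A ha_le, hprodA] at h1
      rw [card_cube A hb_le]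
      exact Nat.eq_of_mul_eq_mul_left (Finset.prod_pos fun j _ => ha j) h1
    refine ⟨hLb, ?_⟩
    intro l hl m hm hlm
    rw [spectrum_sum_eq]
    -- Notation
    set F : (∀ j, ZMod (A j)) → ℂ := fun ν => ∑ x ∈ cube A b, pairP A ν x with hF
    set Lh : (∀ j, ZMod (A j)) → ℂ := fun ν => ∑ l' ∈ L, pairP A ν l' with hLh
    show F (l - m) = 0
    set c := L.card with hcdef
    have hQc : (cube A b).card = c := hLb.symm
    have hL0 : ∀ x ∈ cube A b, ∀ y ∈ cube A b, x ≠ y → Lh (x - y) = 0 := by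
      intro x hx y hy hxy
      have hne : x - y ≠ 0 := sub_ne_zero.mpr hxy
      refine tiles_lhat_zero A hT hne ?_
      intro hczero
      rw [sum_cube_pairP_eq_zero_iff A hdvd ha0 (x - y)] at hczero
      obtain ⟨j, hdj, hnj⟩ := hczero
      have hxj : (x j).val < b j := (mem_cube_iff A hb_le x).mp hx j
      have hyj : (y j).val < b j := (mem_cube_iff A hb_le y).mp hy j
      have hdj' : b j ∣ ((x j - y j)).val := by
        have : (x - y) j = x j - y j := rfl
        rw [this] at hdj
        exact hdj
      have hxyj : x j = y j := zmod_eq_of_dvd_sub_val (A j) (b j) (hbdvd j) (x j) (y j) hxj hyj hdj'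
      apply hnj
      show x j - y j = 0
      rw [hxyj, sub_self]
    have hLh0 : Lh 0 = (c : ℂ) := by
      rw [hLh]
      simp only [pairP_zero_left, Finset.sum_const, nsmul_eq_mul, mul_one]
      rfl
    have hF0 : F 0 = (c : ℂ) := by
      rw [hF]
      simp only [pairP_zero_left, Finset.sum_const, nsmul_eq_mul, mul_one, hQc]
    -- Way 1
    have way1 : ∑ x ∈ cube A b, ∑ y ∈ cube A b, Lh (x - y) * (starRingEnd ℂ) (Lh (x - y))
        = (c : ℂ) * ((c : ℂ) * (c : ℂ)) := by
      have hdiag : ∀ x ∈ cube A b,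
          ∑ y ∈ cube A b, Lh (x - y) * (starRingEnd ℂ) (Lh (x - y)) = (c : ℂ) * (c : ℂ) := by
        intro x hx
        rw [Finset.sum_eq_single x]
        · rw [sub_self, hLh0, map_natCast]
        · intro y hy hyx
          rw [hL0 x hx y hy (fun h => hyx h.symm)]
          simp
        · intro hxx
          exact absurd hx hxx
      rw [Finset.sum_congr rfl hdiag, Finset.sum_const, nsmul_eq_mul, hQc]
    -- Way 2
    have way2 : ∑ x ∈ cube A b, ∑ y ∈ cube A b, Lh (x - y) * (starRingEnd ℂ) (Lh (x - y))
        = ∑ l' ∈ L, ∑ m' ∈ L, F (l' - m') * (starRingEnd ℂ) (F (l' - m')) := by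
      have expand : ∀ x y : (∀ j, ZMod (A j)),
          Lh (x - y) * (starRingEnd ℂ) (Lh (x - y))
            = ∑ l' ∈ L, ∑ m' ∈ L, pairP A (l' - m') x * (starRingEnd ℂ) (pairP A (l' - m') y) := by
        intro x y
        rw [hLh]
        simp only [map_sum]
        rw [Finset.sum_mul_sum]
        exact Finset.sum_congr rfl fun l' _ => Finset.sum_congr rfl fun m' _ =>
          pair_swap A l' m' x y
      have expandF : ∀ l' m' : (∀ j, ZMod (A j)),
          F (l' - m') * (starRingEnd ℂ) (F (l' - m'))
            = ∑ x ∈ cube A b, ∑ y ∈ cube A b,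
                pairP A (l' - m') x * (starRingEnd ℂ) (pairP A (l' - m') y) := by
        intro l' m'
        rw [hF]
        simp only [map_sum]
        rw [Finset.sum_mul_sum]
      calc ∑ x ∈ cube A b, ∑ y ∈ cube A b, Lh (x - y) * (starRingEnd ℂ) (Lh (x - y))
          = ∑ x ∈ cube A b, ∑ y ∈ cube A b, ∑ l' ∈ L, ∑ m' ∈ L,
              pairP A (l' - m') x * (starRingEnd ℂ) (pairP A (l' - m') y) := by
            exact Finset.sum_congr rfl fun x _ => Finset.sum_congr rfl fun y _ => expand x y
        _ = ∑ l' ∈ L, ∑ m' ∈ L, ∑ x ∈ cube A b, ∑ y ∈ cube A b,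
              pairP A (l' - m') x * (starRingEnd ℂ) (pairP A (l' - m') y) :=
            sum4_comm _ _ (fun x y l' m' => pairP A (l' - m') x * (starRingEnd ℂ) (pairP A (l' - m') y))
        _ = ∑ l' ∈ L, ∑ m' ∈ L, F (l' - m') * (starRingEnd ℂ) (F (l' - m')) :=
            Finset.sum_congr rfl fun l' _ => Finset.sum_congr rfl fun m' _ => (expandF l' m').symm
    -- combine, in ℝ
    have key : ∑ l' ∈ L, ∑ m' ∈ L, Complex.normSq (F (l' - m'))
        = (c : ℝ) * ((c : ℝ) * (c : ℝ)) := by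
      have hC : ((∑ l' ∈ L, ∑ m' ∈ L, Complex.normSq (F (l' - m')) : ℝ) : ℂ)
          = (((c : ℝ) * ((c : ℝ) * (c : ℝ)) : ℝ) : ℂ) := by
        push_cast
        calc (∑ l' ∈ L, ∑ m' ∈ L, (Complex.normSq (F (l' - m')) : ℂ))
            = ∑ l' ∈ L, ∑ m' ∈ L, F (l' - m') * (starRingEnd ℂ) (F (l' - m')) :=
              Finset.sum_congr rfl fun l' _ => Finset.sum_congr rfl fun m' _ =>
                (Complex.mul_conj _).symm
          _ = (c : ℂ) * ((c : ℂ) * (c : ℂ)) := way2.symm.trans way1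
      exact_mod_cast hC
    -- diagonal split
    have hsplit : ∀ l' ∈ L, ∑ m' ∈ L, Complex.normSq (F (l' - m'))
        = (c : ℝ) * (c : ℝ) + ∑ m' ∈ L.erase l', Complex.normSq (F (l' - m')) := by
      intro l' hl'
      rw [← Finset.add_sum_erase _ _ hl', sub_self, hF0, Complex.normSq_natCast]
    have hR0 : ∑ l' ∈ L, (∑ m' ∈ L.erase l', Complex.normSq (F (l' - m'))) = 0 := by
      have h1 : ∑ l' ∈ L, ∑ m' ∈ L, Complex.normSq (F (l' - m'))
          = (L.card : ℝ) * ((c : ℝ) * (c : ℝ))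
            + ∑ l' ∈ L, (∑ m' ∈ L.erase l', Complex.normSq (F (l' - m'))) := by
        rw [Finset.sum_congr rfl hsplit, Finset.sum_add_distrib, Finset.sum_const, nsmul_eq_mul]
      rw [key] at h1
      rw [← hcdef] at h1
      linarith
    have hRall : ∀ l' ∈ L, ∑ m' ∈ L.erase l', Complex.normSq (F (l' - m')) = 0 :=
      (Finset.sum_eq_zero_iff_of_nonneg (fun l' _ =>
        Finset.sum_nonneg fun m' _ => Complex.normSq_nonneg _)).mp hR0
    have hterm : Complex.normSq (F (l - m)) = 0 :=
      (Finset.sum_eq_zero_iff_of_nonneg (fun m' _ => Complex.normSq_nonneg _)).mp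
        (hRall l hl) m (Finset.mem_erase.mpr ⟨Ne.symm hlm, hm⟩)
    exact Complex.normSq_eq_zero.mp hterm
  · -- Spectrum → Tiling
    rintro ⟨hcard, horth⟩
    have hsep : ∀ l ∈ L, ∀ m ∈ L, l ≠ m →
        ∃ j, a j ∣ ((l - m) j).val ∧ (l - m) j ≠ 0 := by
      intro l hl m hm hlm
      have h := horth l hl m hm hlm
      rw [spectrum_sum_eq] at h
      rw [sum_cube_pairP_eq_zero_iff A hbdvd hb0 (l - m)] at h
      obtain ⟨j, h1, h2⟩ := h
      rw [hab j] at h1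
      exact ⟨j, h1, h2⟩
    have huniq : ∀ p q : ((∀ j, ZMod (A j)) × (∀ j, ZMod (A j))),
        p.1 ∈ cube A a → p.2 ∈ L → q.1 ∈ cube A a → q.2 ∈ L →
        p.1 + p.2 = q.1 + q.2 → p = q := by
      rintro ⟨e, l⟩ ⟨e', l'⟩ he hl he' hl' heq
      simp only at he hl he' hl' heq ⊢
      by_cases hll : l = l'
      · subst hll
        have : e = e' := add_right_cancel heq
        rw [this]
      · exfalso
        obtain ⟨j, hdj, hnj⟩ := hsep l hl l' hl' hll
        have hsub : l - l' = e' - e := by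
          rw [sub_eq_sub_iff_add_eq_add, add_comm l e]
          exact heq
        have hej : (e j).val < a j := (mem_cube_iff A ha_le e).mp he j
        have hej' : (e' j).val < a j := (mem_cube_iff A ha_le e').mp he' j
        have hdj' : a j ∣ (e' j - e j).val := by
          have h1 : (l - l') j = e' j - e j := by rw [hsub]; rfl
          rw [h1] at hdj
          exact hdj
        have : e' j = e j :=
          zmod_eq_of_dvd_sub_val (A j) (a j) (hdvd j) (e' j) (e j) hej' hej hdj'
        apply hnj
        have h1 : (l - l') j = e' j - e j := by rw [hsub]; rfl
        rw [h1, this, sub_self]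
    have hcards : Fintype.card {p // p ∈ (cube A a) ×ˢ L}
        = Fintype.card (∀ j, ZMod (A j)) := by
      rw [Fintype.card_coe, Finset.card_product, card_cube A ha_le, hcard,
        card_cube A hb_le, Fintype.card_pi]
      rw [← hprodA]
      exact (Finset.prod_congr rfl fun j _ => (ZMod.card (A j)).symm)
    have hinj : Function.Injective
        (fun q : {p // p ∈ (cube A a) ×ˢ L} => q.1.1 + q.1.2) := by
      rintro ⟨p, hp⟩ ⟨q, hq⟩ h
      rw [Finset.mem_product] at hp hq
      exact Subtype.ext (huniq p q hp.1 hp.2 hq.1 hq.2 h)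
    have hbij := (Fintype.bijective_iff_injective_and_card _).mpr ⟨hinj, hcards⟩
    intro x
    obtain ⟨⟨p, hp⟩, hfp⟩ := hbij.2 x
    rw [Finset.mem_product] at hp
    refine ⟨p, ⟨hp.1, hp.2, hfp.symm⟩, ?_⟩
    rintro q ⟨hq1, hq2, hq3⟩
    exact huniq q p hq1 hq2 hp.1 hp.2 (by rw [← hq3, ← hfp])
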